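/- Let h be a fixed nonzero integer and t > 0 fixed. Then there exists a constant C depending only on t and h such that for every prime p > |h|, with J = (p−1)/2, the extreme angles and average gap satisfy |α_{p−2} − 1/(tJ)| ≤ C/J², |α_1 + 1/(tJ)| ≤ C/J², and |Δ_av − 1/(tJ²)| ≤ C/J³. -/

import Mathlib

open MeasureTheory

noncomputable section

/-- `J = (p-1)/2` as a real number. -/
def Jr (p : ℕ) : ℝ := ((p : ℝ) - 1) / 2

/-- The parameters `n` of the neighbor-flips modular curve `A(p,h)`:
`n ∈ ℤ/pℤ` with `n ≠ 0` and `n ≠ -h`. -/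
def curveIdx (p : ℕ) [NeZero p] (h : ℤ) : Finset (ZMod p) :=
  Finset.univ.filter (fun n => n ≠ 0 ∧ n ≠ -(h : ZMod p))

/-- The integer representative of `m ∈ ℤ/pℤ` in `[-(p-1)/2, (p-1)/2]` (for odd `p`). -/
def rep (p : ℕ) (m : ZMod p) : ℤ :=
  if (m.val : ℤ) ≤ ((p : ℤ) - 1) / 2 then (m.val : ℤ) else (m.val : ℤ) - (p : ℤ)

/-- The angle under which the observer placed at `(-tJ², 0)` sees the point
`([n⁻¹], [(n+h)⁻¹])` of the curve `A(p,h)`. -/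
def angleOf (p : ℕ) [NeZero p] (h : ℤ) (t : ℝ) (n : ZMod p) : ℝ :=
  Real.arctan ((rep p (n + (h : ZMod p))⁻¹ : ℝ) / ((rep p n⁻¹ : ℝ) + t * (Jr p) ^ 2))

/-- `α 0 ≤ α 1 ≤ ⋯ ≤ α (p-3)` is the list, in increasing order, of the `p - 2` angles
under which the observer at `(-tJ², 0)` sees the points of `A(p,h)`
(the angles of the paper are `α_j = α (j-1)` for `1 ≤ j ≤ p-2`). -/
def IsSortedAngles (p : ℕ) [NeZero p] (h : ℤ) (t : ℝ) (α : ℕ → ℝ) : Prop :=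
  Multiset.map (angleOf p h t) (curveIdx p h).val = Multiset.map α (Multiset.range (p - 2)) ∧
  ∀ i j : ℕ, i ≤ j → j < p - 2 → α i ≤ α j

/-- The gap distribution function `G_{t,p,h}(λ)`, expressed in terms of the sorted
sequence of angles `α`: the proportion, among the `p - 3` consecutive gaps, of those of
size at least `λ` times the average gap `Δ_av = (α_max - α_min)/(p-3)`. -/
def Gval (p : ℕ) (lam : ℝ) (α : ℕ → ℝ) : ℝ :=
  (((Finset.range (p - 3)).filter
      (fun j => lam * ((α (p - 3) - α 0) / ((p : ℝ) - 3)) ≤ α (j + 1) - α j)).card : ℝ)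
    / ((p : ℝ) - 3)

/-- The limit domain `Ω_D(t,λ) ⊆ [-1/2,1/2]^{2D+1}`, with coordinates
`(x, y_{-D+1}, …, y_D)`: the coordinate of index `0` is `x` and the coordinate of index
`i ∈ {1, …, 2D}` is `y_j` with `j = i - D`.  It consists of the points with `x ≥ 0` such
that `y_j ∉ [y_0 + (j-λ)t/(4x), y_0 + j·t/(4x)]` for all `j ≠ 0`. -/
def Omega (D : ℕ) (t lam : ℝ) : Set (Fin (2 * D + 1) → ℝ) :=
  {v | (∀ i, v i ∈ Set.Icc (-(1 : ℝ) / 2) (1 / 2)) ∧ 0 ≤ v ⟨0, by omega⟩ ∧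
    ∀ i : Fin (2 * D + 1), (i : ℕ) ≠ 0 → (i : ℕ) ≠ D →
      v i ∉ Set.Icc
        (v ⟨D, by omega⟩ + (((i : ℕ) : ℝ) - (D : ℝ) - lam) * t / (4 * v ⟨0, by omega⟩))
        (v ⟨D, by omega⟩ + (((i : ℕ) : ℝ) - (D : ℝ)) * t / (4 * v ⟨0, by omega⟩))}

namespace S13

open Real


lemma arctan_le_self' {x : ℝ} (hx : 0 ≤ x) : Real.arctan x ≤ x := by
  have hmono : MonotoneOn (fun s : ℝ => s - Real.arctan s) (Set.Ici 0) := by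
    apply monotoneOn_of_deriv_nonneg (convex_Ici 0)
    · exact (continuous_id.sub Real.continuous_arctan).continuousOn
    · intro s _
      exact (differentiable_id.sub Real.differentiable_arctan).differentiableAt.differentiableWithinAt
    · intro s _
      have hd : HasDerivAt (fun s : ℝ => s - Real.arctan s) (1 - 1/(1+s^2)) s :=
        (hasDerivAt_id s).sub (Real.hasDerivAt_arctan s)
      rw [hd.deriv]
      have h1 : (0:ℝ) < 1 + s ^ 2 := by positivity
      rw [sub_nonneg, div_le_one h1]
      nlinarith [sq_nonneg s]
  have h0 := hmono Set.self_mem_Ici (Set.mem_Ici.mpr hx) hx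
  simp only [Real.arctan_zero, sub_zero] at h0
  linarith

lemma le_arctan' {x : ℝ} (hx : 0 ≤ x) : x - x^3 ≤ Real.arctan x := by
  have hmono : MonotoneOn (fun s : ℝ => Real.arctan s - s + s ^ 3) (Set.Ici 0) := by
    apply monotoneOn_of_deriv_nonneg (convex_Ici 0)
    · exact ((Real.continuous_arctan.sub continuous_id).add (continuous_pow 3)).continuousOn
    · intro s _
      exact (((Real.differentiable_arctan s).sub (differentiable_id s)).add
        ((differentiable_pow 3) s)).differentiableWithinAt
    · intro s _
      have hd : HasDerivAt (fun s : ℝ => Real.arctan s - s + s ^ 3)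
          (1/(1+s^2) - 1 + 3*s^2) s := by
        have := ((Real.hasDerivAt_arctan s).sub (hasDerivAt_id s)).add (hasDerivAt_pow 3 s)
        refine this.congr_deriv ?_; norm_num
      rw [hd.deriv]
      have h1 : (0:ℝ) < 1 + s ^ 2 := by positivity
      have h2 : 1/(1+s^2) - 1 + 3*s^2 = (2*s^2 + 3*s^4)/(1+s^2) := by
        field_simp
        ring
      rw [h2]
      positivity
  have h0 := hmono Set.self_mem_Ici (Set.mem_Ici.mpr hx) hx
  simp only [Real.arctan_zero] at h0
  nlinarith [h0]

lemma abs_arctan_le (x : ℝ) : |Real.arctan x| ≤ π/2 :=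
  abs_le.mpr ⟨by linarith [Real.neg_pi_div_two_lt_arctan x], (Real.arctan_lt_pi_div_two x).le⟩



lemma rep_bounds {p : ℕ} [NeZero p] (hodd : Odd p) (m : ZMod p) :
    -(((p:ℤ) - 1) / 2) ≤ rep p m ∧ rep p m ≤ ((p:ℤ) - 1) / 2 := by
  have hv : m.val < p := ZMod.val_lt m
  obtain ⟨j, hj⟩ := hodd
  have hpz : (p:ℤ) = 2*(j:ℤ)+1 := by exact_mod_cast congrArg (Nat.cast : ℕ → ℤ) hj
  have hvz : (m.val : ℤ) < (p:ℤ) := by exact_mod_cast hv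
  have hv0 : (0:ℤ) ≤ (m.val : ℤ) := Int.ofNat_nonneg _
  unfold rep
  split_ifs with hle
  · omega
  · omega

lemma rep_intCast {p : ℕ} [NeZero p] (hodd : Odd p) (a : ℤ)
    (h1 : -(((p:ℤ) - 1) / 2) ≤ a) (h2 : a ≤ ((p:ℤ) - 1) / 2) : rep p (a : ZMod p) = a := by
  obtain ⟨j, hj⟩ := hodd
  have hpz : (p:ℤ) = 2*(j:ℤ)+1 := by exact_mod_cast congrArg (Nat.cast : ℕ → ℤ) hj
  have hval : ((a : ZMod p).val : ℤ) = a % (p:ℤ) := ZMod.val_intCast a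
  have hp0 : (0:ℤ) < (p:ℤ) := by omega
  rcases le_or_gt 0 a with ha | ha
  · have : a % (p:ℤ) = a := Int.emod_eq_of_lt ha (by omega)
    unfold rep
    rw [hval, this]
    simp only [if_pos h2]
  · have hmod : a % (p:ℤ) = a + p := by
      have h3 : (a + (p:ℤ)) % p = a % p := by
        simpa using Int.add_mul_emod_self_left (a := a) (b := (p:ℤ)) (c := 1)
      rw [← h3, Int.emod_eq_of_lt (by omega) (by omega)]
    unfold rep
    rw [hval, hmod, if_neg (by omega)]
    omega

lemma pick {p : ℕ} [Fact p.Prime] (a b : ℤ) (hab : ¬ ((p:ℤ) ∣ (a - b)))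
    (ha : ¬ ((p:ℤ) ∣ a)) (hb : ¬ ((p:ℤ) ∣ b)) (w : ZMod p) :
    ∃ c : ℤ, (c = a ∨ c = b) ∧ (c : ZMod p) ≠ 0 ∧ (c : ZMod p) ≠ w := by
  by_cases hw : (a : ZMod p) = w
  · refine ⟨b, Or.inr rfl, ?_, ?_⟩
    · rwa [Ne, ZMod.intCast_zmod_eq_zero_iff_dvd]
    · intro hbw
      apply hab
      rw [← ZMod.intCast_zmod_eq_zero_iff_dvd]
      push_cast
      rw [hbw, hw, sub_self]
  · exact ⟨a, Or.inl rfl, by rwa [Ne, ZMod.intCast_zmod_eq_zero_iff_dvd], hw⟩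

lemma not_dvd_of_bounds {p : ℕ} {c : ℤ} (hc0 : c ≠ 0) (hcp : |c| < (p:ℤ)) :
    ¬ ((p:ℤ) ∣ c) := by
  intro hd
  have := Int.le_of_dvd (abs_pos.mpr hc0) ((dvd_abs _ _).mpr hd)
  omega

lemma exists_n {p : ℕ} [Fact p.Prime] (h : ℤ) (c : ℤ) (hc0 : (c : ZMod p) ≠ 0)
    (hch : (c : ZMod p) ≠ ((h : ZMod p))⁻¹) :
    ∃ n ∈ curveIdx p h, (n + (h : ZMod p))⁻¹ = (c : ZMod p) := by
  refine ⟨((c : ZMod p))⁻¹ - (h : ZMod p), ?_, ?_⟩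
  · simp only [curveIdx, Finset.mem_filter, Finset.mem_univ, true_and]
    constructor
    · intro he
      apply hch
      have h2 : ((c : ZMod p))⁻¹ = (h : ZMod p) := by
        rwa [sub_eq_zero] at he
      rw [← inv_inv (c : ZMod p), h2]
    · intro he
      apply hc0
      have h2 : ((c : ZMod p))⁻¹ = 0 := by
        have := congrArg (· + (h : ZMod p)) he
        simpa using this
      exact inv_eq_zero.mp h2
  · rw [sub_add_cancel, inv_inv]

lemma mem_angle {p : ℕ} [NeZero p] {h : ℤ} {t : ℝ} {α : ℕ → ℝ}
    (hα : IsSortedAngles p h t α) {i : ℕ} (hi : i < p - 2) :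
    ∃ n ∈ curveIdx p h, α i = angleOf p h t n := by
  have hmem : α i ∈ Multiset.map α (Multiset.range (p - 2)) :=
    Multiset.mem_map_of_mem α (Multiset.mem_range.mpr hi)
  rw [← hα.1] at hmem
  obtain ⟨n, hn, he⟩ := Multiset.mem_map.mp hmem
  exact ⟨n, hn, he.symm⟩

lemma angle_between {p : ℕ} [NeZero p] {h : ℤ} {t : ℝ} {α : ℕ → ℝ}
    (hα : IsSortedAngles p h t α) (hp : 3 ≤ p) {n : ZMod p} (hn : n ∈ curveIdx p h) :
    α 0 ≤ angleOf p h t n ∧ angleOf p h t n ≤ α (p - 3) := by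
  have hmem : angleOf p h t n ∈ Multiset.map (angleOf p h t) (curveIdx p h).val :=
    Multiset.mem_map_of_mem _ hn
  rw [hα.1] at hmem
  obtain ⟨i, hi, he⟩ := Multiset.mem_map.mp hmem
  rw [Multiset.mem_range] at hi
  rw [← he]
  exact ⟨hα.2 0 i (Nat.zero_le i) hi, hα.2 i (p - 3) (by omega) (by omega)⟩

section Ineq

variable {t J x y : ℝ}

lemma dpos (ht : 0 < t) (hJ : 2 ≤ J) (htJ : 2 ≤ t*J) (hx : -J ≤ x) :
    0 < x + t*J^2 := by nlinarith

lemma dpos2 (ht : 0 < t) (hJ : 2 ≤ J) (htJ : 2 ≤ t*J) : 0 < t*J^2 - J := by nlinarith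

lemma ratio_ub (ht : 0 < t) (hJ : 2 ≤ J) (htJ : 2 ≤ t*J)
    (hx : -J ≤ x) (hy : y ≤ J) : y/(x + t*J^2) ≤ J/(t*J^2 - J) := by
  rw [div_le_div_iff₀ (dpos ht hJ htJ hx) (dpos2 ht hJ htJ)]
  nlinarith [dpos2 ht hJ htJ]

lemma ratio_lb (ht : 0 < t) (hJ : 2 ≤ J) (htJ : 2 ≤ t*J)
    (hx : -J ≤ x) (hy : -J ≤ y) : -(J/(t*J^2 - J)) ≤ y/(x + t*J^2) := by
  have := ratio_ub ht hJ htJ hx (y := -y) (by linarith)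
  rw [neg_div] at this
  linarith

lemma arctan_big_ub (ht : 0 < t) (hJ : 2 ≤ J) (htJ : 2 ≤ t*J) :
    Real.arctan (J/(t*J^2 - J)) ≤ 1/(t*J) + 2/(t^2*J^2) := by
  have hJ0 : 0 < J := by linarith
  have hd2 : 0 < t*J^2 - J := dpos2 ht hJ htJ
  have h1 : Real.arctan (J/(t*J^2-J)) ≤ J/(t*J^2-J) :=
    arctan_le_self' (by positivity)
  have ht0 : t ≠ 0 := ne_of_gt ht
  have hJ0' : J ≠ 0 := ne_of_gt hJ0
  have hd2' : t*J^2 - J ≠ 0 := ne_of_gt hd2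
  have hu1 : t*J - 1 ≠ 0 := by nlinarith
  have hu1' : 0 < t*J - 1 := by nlinarith
  have e : 1/(t*J) + 2/(t^2*J^2) - J/(t*J^2-J) = (t*J-2)/((t*J)^2*(t*J-1)) := by
    field_simp
    ring
  have hnn : 0 ≤ (t*J-2)/((t*J)^2*(t*J-1)) := by
    apply div_nonneg (by linarith)
    positivity
  linarith

lemma arctan_big_lb (ht : 0 < t) (hJ : 2 ≤ J) (htJ : 2 ≤ t*J) :
    1/(t*J) - (2+t)/(t^2*J^2) ≤ Real.arctan ((J-1)/(t*J^2+J)) := by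
  have hJ0 : 0 < J := by linarith
  have hdp : 0 < t*J^2 + J := by positivity
  set r := (J-1)/(t*J^2+J) with hr
  have hr0 : 0 ≤ r := div_nonneg (by linarith) hdp.le
  have h1 : r - r^3 ≤ Real.arctan r := le_arctan' hr0
  have htJ0 : 0 < t*J := by linarith
  have hrle : r ≤ 1/(t*J) := by
    rw [hr, div_le_div_iff₀ hdp htJ0]
    nlinarith
  have h3 : r^3 ≤ (1/(t*J))^3 := by
    exact pow_le_pow_left₀ hr0 hrle 3
  have h4 : (1/(t*J))^3 ≤ (1/2) * (1/(t^2*J^2)) := by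
    have ha : 1/(t*J) ≤ 1/2 := by
      rw [div_le_div_iff₀ htJ0 (by norm_num)]
      linarith
    have hb : (1/(t*J))^2 = 1/(t^2*J^2) := by
      field_simp
    calc (1/(t*J))^3 = (1/(t*J)) * (1/(t*J))^2 := by ring
      _ ≤ (1/2) * (1/(t*J))^2 := by
          apply mul_le_mul_of_nonneg_right ha (by positivity)
      _ = (1/2) * (1/(t^2*J^2)) := by rw [hb]
  have h5 : 1/(t*J) - (1+t)/(t^2*J^2) ≤ r := by
    have ht0 : t ≠ 0 := ne_of_gt ht
    have hJ0' : J ≠ 0 := ne_of_gt hJ0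
    have hdp' : t*J^2 + J ≠ 0 := ne_of_gt hdp
    have hu1 : t*J + 1 ≠ 0 := by positivity
    have e : r - (1/(t*J) - (1+t)/(t^2*J^2)) = (1+t)/((t*J)^2*(t*J+1)) := by
      rw [hr]
      field_simp
      ring
    have hnn : 0 ≤ (1+t)/((t*J)^2*(t*J+1)) := by positivity
    linarith
  have hsplit : (2+t)/(t^2*J^2) = (1+t)/(t^2*J^2) + 1/(t^2*J^2) := by ring
  have hpos : (0:ℝ) ≤ 1/(t^2*J^2) := by positivity
  linarith

lemma ratio_lb_special (ht : 0 < t) (hJ : 2 ≤ J) (htJ : 2 ≤ t*J)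
    (hx : -J ≤ x) (hx2 : x ≤ J) (hy : J - 1 ≤ y) :
    (J-1)/(t*J^2+J) ≤ y/(x + t*J^2) := by
  have hd1 := dpos ht hJ htJ hx
  have hdp : 0 < t*J^2 + J := by nlinarith
  rw [div_le_div_iff₀ hdp hd1]
  nlinarith

lemma ratio_ub_special (ht : 0 < t) (hJ : 2 ≤ J) (htJ : 2 ≤ t*J)
    (hx : -J ≤ x) (hx2 : x ≤ J) (hy : y ≤ -(J - 1)) :
    y/(x + t*J^2) ≤ -((J-1)/(t*J^2+J)) := by
  have := ratio_lb_special ht hJ htJ hx hx2 (y := -y) (by linarith)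
  rw [neg_div] at this
  linarith

end Ineq

lemma extremes {p : ℕ} [Fact p.Prime] (h : ℤ) {t : ℝ} (ht : 0 < t) (hp7 : 7 ≤ p)
    (htJ : 2 ≤ t * Jr p) {α : ℕ → ℝ} (hα : IsSortedAngles p h t α) :
    |α (p-3) - 1/(t * Jr p)| ≤ (3+t)/(t^2*(Jr p)^2) ∧
    |α 0 + 1/(t * Jr p)| ≤ (3+t)/(t^2*(Jr p)^2) := by
  have hprime : p.Prime := Fact.out
  have hodd : Odd p := hprime.odd_of_ne_two (by omega)
  obtain ⟨j, hj⟩ := hodd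
  have hodd : Odd p := ⟨j, hj⟩
  have hpz : (p:ℤ) = 2*(j:ℤ)+1 := by exact_mod_cast congrArg (Nat.cast : ℕ → ℤ) hj
  set J := Jr p with hJdef
  set k : ℤ := ((p:ℤ)-1)/2 with hkdef
  have hkj : k = (j:ℤ) := by omega
  have hpR : (p:ℝ) = 2*(j:ℝ)+1 := by exact_mod_cast congrArg (Nat.cast : ℕ → ℝ) hj
  have hkJ : (k:ℝ) = J := by
    rw [hkj, hJdef]
    unfold Jr
    rw [hpR]
    push_cast
    ring
  have hk3 : 3 ≤ k := by omega
  have hJ2 : (2:ℝ) ≤ J := by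
    rw [← hkJ]
    exact_mod_cast by omega
  have hrepR : ∀ m : ZMod p, -J ≤ (rep p m : ℝ) ∧ (rep p m : ℝ) ≤ J := by
    intro m
    obtain ⟨l1, l2⟩ := rep_bounds hodd m
    constructor
    · have c1 : ((-k : ℤ) : ℝ) ≤ (rep p m : ℝ) := Int.cast_le.mpr l1
      rw [Int.cast_neg, hkJ] at c1
      exact c1
    · have c2 : ((rep p m : ℤ) : ℝ) ≤ ((k : ℤ) : ℝ) := Int.cast_le.mpr l2
      rw [hkJ] at c2
      exact c2
  have hangle : ∀ n ∈ curveIdx p h,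
      -(Real.arctan (J/(t*J^2-J))) ≤ angleOf p h t n ∧
      angleOf p h t n ≤ Real.arctan (J/(t*J^2-J)) := by
    intro n _
    have hx := hrepR n⁻¹
    have hy := hrepR (n + (h : ZMod p))⁻¹
    unfold angleOf
    constructor
    · rw [← Real.arctan_neg]
      exact Real.arctan_strictMono.monotone (ratio_lb ht hJ2 htJ hx.1 hy.1)
    · exact Real.arctan_strictMono.monotone (ratio_ub ht hJ2 htJ hx.1 hy.2)
  have hbig_ub := arctan_big_ub ht hJ2 htJ
  have hbig_lb := arctan_big_lb ht hJ2 htJ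
  -- upper bound for the max, lower bound for the min
  obtain ⟨nM, hnM, heM⟩ := mem_angle hα (i := p-3) (by omega)
  obtain ⟨nm, hnm, hem⟩ := mem_angle hα (i := 0) (by omega)
  have hub : α (p-3) ≤ 1/(t*J) + 2/(t^2*J^2) := by
    rw [heM]
    exact le_trans (hangle nM hnM).2 hbig_ub
  have hlb0 : -(1/(t*J)) - 2/(t^2*J^2) ≤ α 0 := by
    rw [hem]
    have := (hangle nm hnm).1
    linarith
  -- special points
  have hnd1 : ¬ ((p:ℤ) ∣ (k - (k-1))) := not_dvd_of_bounds (by omega) (by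
    rw [show k - (k-1) = 1 by ring, abs_one]; omega)
  have hndk : ¬ ((p:ℤ) ∣ k) := not_dvd_of_bounds (by omega) (by
    rw [abs_of_nonneg (by omega : (0:ℤ) ≤ k)]; omega)
  have hndk1 : ¬ ((p:ℤ) ∣ (k-1)) := not_dvd_of_bounds (by omega) (by
    rw [abs_of_nonneg (by omega : (0:ℤ) ≤ k-1)]; omega)
  have hnd1' : ¬ ((p:ℤ) ∣ (-k - (-(k-1)))) := not_dvd_of_bounds (by omega) (by
    rw [show -k - (-(k-1)) = -1 by ring, abs_neg, abs_one]; omega)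
  have hndk' : ¬ ((p:ℤ) ∣ (-k)) := not_dvd_of_bounds (by omega) (by
    rw [abs_neg, abs_of_nonneg (by omega : (0:ℤ) ≤ k)]; omega)
  have hndk1' : ¬ ((p:ℤ) ∣ (-(k-1))) := not_dvd_of_bounds (by omega) (by
    rw [abs_neg, abs_of_nonneg (by omega : (0:ℤ) ≤ k-1)]; omega)
  -- max lower bound
  have hlb : 1/(t*J) - (2+t)/(t^2*J^2) ≤ α (p-3) := by
    obtain ⟨c, hc_or, hc0, hch⟩ := pick k (k-1) hnd1 hndk hndk1 (((h : ZMod p))⁻¹)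
    obtain ⟨n, hn, hninv⟩ := exists_n h c hc0 hch
    have hcb : k - 1 ≤ c ∧ c ≤ k := by rcases hc_or with rfl | rfl <;> omega
    have hyrep : rep p (n + (h : ZMod p))⁻¹ = c := by
      rw [hninv]
      exact rep_intCast hodd c (by omega) (by omega)
    have hyR : J - 1 ≤ ((rep p (n + (h : ZMod p))⁻¹ : ℤ) : ℝ) := by
      rw [hyrep]
      have : ((k - 1 : ℤ) : ℝ) ≤ ((c : ℤ) : ℝ) := Int.cast_le.mpr hcb.1
      rw [Int.cast_sub, Int.cast_one, hkJ] at this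
      exact this
    have hx := hrepR n⁻¹
    have hmid : Real.arctan ((J-1)/(t*J^2+J)) ≤ angleOf p h t n := by
      unfold angleOf
      exact Real.arctan_strictMono.monotone
        (ratio_lb_special ht hJ2 htJ hx.1 hx.2 hyR)
    have := (angle_between hα (by omega) hn).2
    linarith
  -- min upper bound
  have hub0 : α 0 ≤ -(1/(t*J)) + (2+t)/(t^2*J^2) := by
    obtain ⟨c, hc_or, hc0, hch⟩ := pick (-k) (-(k-1)) hnd1' hndk' hndk1' (((h : ZMod p))⁻¹)
    obtain ⟨n, hn, hninv⟩ := exists_n h c hc0 hch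
    have hcb : -k ≤ c ∧ c ≤ -(k - 1) := by rcases hc_or with rfl | rfl <;> omega
    have hyrep : rep p (n + (h : ZMod p))⁻¹ = c := by
      rw [hninv]
      exact rep_intCast hodd c (by omega) (by omega)
    have hyR : ((rep p (n + (h : ZMod p))⁻¹ : ℤ) : ℝ) ≤ -(J - 1) := by
      rw [hyrep]
      have : ((c : ℤ) : ℝ) ≤ ((-(k - 1) : ℤ) : ℝ) := Int.cast_le.mpr hcb.2
      rw [Int.cast_neg, Int.cast_sub, Int.cast_one, hkJ] at this
      exact this
    have hx := hrepR n⁻¹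
    have hmid : angleOf p h t n ≤ -(Real.arctan ((J-1)/(t*J^2+J))) := by
      unfold angleOf
      rw [← Real.arctan_neg]
      exact Real.arctan_strictMono.monotone
        (ratio_ub_special ht hJ2 htJ hx.1 hx.2 hyR)
    have := (angle_between hα (by omega) hn).1
    linarith
  have hden : (0:ℝ) < t^2*J^2 := by positivity
  have h23 : 2/(t^2*J^2) ≤ (3+t)/(t^2*J^2) := by gcongr <;> linarith
  have h2t : (2+t)/(t^2*J^2) ≤ (3+t)/(t^2*J^2) := by gcongr <;> linarith
  constructor
  · rw [abs_le]
    constructor <;> linarith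
  · rw [abs_le]
    constructor <;> linarith

end S13

set_option maxHeartbeats 1000000 in
/-- for fixed nonzero `h` and fixed `t > 0` there is a constant
`C = C(t,h)` such that for every prime `p > |h|`, with `J = (p-1)/2`, the extreme
angles satisfy `|α_{p-2} - 1/(tJ)| ≤ C/J²` and `|α_1 + 1/(tJ)| ≤ C/J²`, and the average
gap satisfies `|Δ_av - 1/(tJ²)| ≤ C/J³`. -/
theorem stmt13 (h : ℤ) (hh : h ≠ 0) (t : ℝ) (ht : 0 < t) :
    ∃ C : ℝ, ∀ (p : ℕ) [Fact p.Prime], h.natAbs < p →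
      ∀ α : ℕ → ℝ, IsSortedAngles p h t α →
        (∀ i : ℕ, i < p - 2 →
          (i = p - 3 → |α i - 1 / (t * Jr p)| ≤ C / (Jr p) ^ 2) ∧
          (i = 0 → |α i + 1 / (t * Jr p)| ≤ C / (Jr p) ^ 2)) ∧
        (2 < p →
          |(α (p - 3) - α 0) / ((p : ℝ) - 3) - 1 / (t * (Jr p) ^ 2)| ≤ C / (Jr p) ^ 3) := by
  have hpi := Real.pi_pos
  have h1t : (0:ℝ) < 1/t := by positivity
  have h1t2 : (0:ℝ) ≤ (1/t)^2 := by positivity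
  set J0 : ℝ := 2 + 2*(1/t) with hJ0def
  have hJ0gt : 2 < J0 := by simp only [hJ0def]; linarith
  set C1 : ℝ := (3+t)/t^2 with hC1def
  have hC1pos : 0 < C1 := by positivity
  set S : ℝ := Real.pi + 10 + 10*(1/t) + 10*(1/t)^2 + t + 2*C1 with hSdef
  have hSpos : 0 < S := by positivity
  set C : ℝ := (J0+1)^3 * S with hCdef
  have hCpos : 0 < C := by positivity
  have hSC : S ≤ C := by
    have h1 : (1:ℝ) ≤ (J0+1)^3 := by
      calc (1:ℝ) = 1^3 := by norm_num
        _ ≤ (J0+1)^3 := pow_le_pow_left₀ (by norm_num) (by linarith) 3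
    calc S = 1 * S := (one_mul S).symm
      _ ≤ (J0+1)^3 * S := mul_le_mul_of_nonneg_right h1 hSpos.le
  have hkey : ∀ (e : ℕ), e ≤ 3 → ∀ B Jv : ℝ, 0 ≤ B → B ≤ S → 1 ≤ Jv → Jv ≤ J0 →
      B ≤ C/Jv^e := by
    intro e he B Jv hB hBS hJ1 hJle
    rw [le_div_iff₀ (by positivity)]
    calc B * Jv^e ≤ S * (J0+1)^e := by
          apply mul_le_mul hBS (pow_le_pow_left₀ (by linarith) (by linarith) e)
            (by positivity) hSpos.le
      _ ≤ S * (J0+1)^3 := by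
          apply mul_le_mul_of_nonneg_left (pow_le_pow_right₀ (by linarith) he) hSpos.le
      _ = C := by rw [hCdef]; ring
  refine ⟨C, ?_⟩
  intro p hp hph α hα
  haveI := hp
  have hprime : p.Prime := hp.out
  have hp2 : 2 ≤ p := hprime.two_le
  have habs : ∀ i, i < p - 2 → |α i| ≤ Real.pi/2 := by
    intro i hi
    obtain ⟨n, _, he⟩ := S13.mem_angle hα hi
    rw [he]
    unfold angleOf
    exact S13.abs_arctan_le _
  rcases lt_or_ge (Jr p) J0 with hsmall | hbig
  · -- small primes: crude bounds
    constructor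
    · intro i hi
      have hp3 : 3 ≤ p := by omega
      have hJ1 : (1:ℝ) ≤ Jr p := by
        have h3 : (3:ℝ) ≤ (p:ℝ) := by exact_mod_cast hp3
        unfold Jr
        linarith
      have hJpos : (0:ℝ) < Jr p := by linarith
      have hai := abs_le.mp (habs i hi)
      have htJpos : 0 < t * Jr p := by positivity
      have htJ1 : 1/(t * Jr p) ≤ 1/t := by
        apply one_div_le_one_div_of_le ht
        nlinarith
      have h0tJ : 0 < 1/(t * Jr p) := by positivity
      have hB : Real.pi/2 + 1/t ≤ S := by
        simp only [hSdef]
        linarith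
      have hCb : Real.pi/2 + 1/t ≤ C/(Jr p)^2 :=
        hkey 2 (by norm_num) _ _ (by positivity) hB hJ1 hsmall.le
      constructor <;> intro _ <;> rw [abs_le] <;> constructor <;> linarith
    · intro hp3'
      have hp4 : p ≠ 4 := by
        intro he
        rw [he] at hprime
        norm_num at hprime
      rcases (by omega : p = 3 ∨ 5 ≤ p) with hp3 | hp5
      · subst hp3
        have hJ3 : Jr 3 = 1 := by unfold Jr; norm_num
        simp only [show (3:ℕ) - 3 = 0 from rfl, hJ3]
        rw [sub_self, show ((3:ℕ):ℝ) - 3 = 0 by norm_num, div_zero, zero_sub, abs_neg,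
          one_pow, mul_one, one_pow, div_one]
        rw [abs_of_pos (by positivity)]
        have hB : 1/t ≤ S := by simp only [hSdef]; linarith
        have := hkey 0 (by norm_num) (1/t) 1 (by positivity) hB le_rfl (by linarith)
        simpa using this
      · have hJ2 : (2:ℝ) ≤ Jr p := by
          have h5 : (5:ℝ) ≤ (p:ℝ) := by exact_mod_cast hp5
          unfold Jr
          linarith
        have hMa := abs_le.mp (habs (p-3) (by omega))
        have hma := abs_le.mp (habs 0 (by omega))
        have hP3 : (p:ℝ) - 3 = 2*(Jr p) - 2 := by unfold Jr; ring
        have hden : (0:ℝ) < 2*(Jr p) - 2 := by linarith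
        have hdq : |(α (p-3) - α 0)/((p:ℝ)-3)| ≤ Real.pi/2 := by
          rw [hP3, abs_div, abs_of_pos hden, div_le_iff₀ hden]
          have := abs_le.mpr (⟨by linarith, by linarith⟩ :
            -(Real.pi) ≤ α (p-3) - α 0 ∧ α (p-3) - α 0 ≤ Real.pi)
          nlinarith [abs_nonneg (α (p-3) - α 0)]
        have htJ2 : 1/(t * (Jr p)^2) ≤ 1/t := by
          apply one_div_le_one_div_of_le ht
          have hJsq : (1:ℝ) ≤ (Jr p)^2 := by nlinarith
          nlinarith
        have h0tJ : 0 < 1/(t * (Jr p)^2) := by positivity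
        have hB : Real.pi/2 + 1/t ≤ S := by simp only [hSdef]; linarith
        have hCb : Real.pi/2 + 1/t ≤ C/(Jr p)^3 :=
          hkey 3 le_rfl _ _ (by positivity) hB (by linarith) hsmall.le
        have hd := abs_le.mp hdq
        rw [abs_le]
        constructor <;> linarith
  · -- large primes
    have hJgt2 : (2:ℝ) < Jr p := lt_of_lt_of_le hJ0gt hbig
    have hp5R : (5:ℝ) < (p:ℝ) := by
      unfold Jr at hJgt2
      linarith
    have hp6 : 6 ≤ p := by
      have h5 : 5 < p := by exact_mod_cast hp5R
      omega
    have hp7 : 7 ≤ p := by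
      have hne : p ≠ 6 := by
        intro he
        rw [he] at hprime
        norm_num at hprime
      omega
    have htJ0 : t * J0 = 2*t + 2 := by
      have e : t * (2 + 2*(1/t)) = 2*t + 2 := by field_simp
      rw [hJ0def]
      exact e
    have htJ : 2 ≤ t * Jr p := by
      have h1 : t * J0 ≤ t * Jr p := mul_le_mul_of_nonneg_left hbig ht.le
      linarith
    obtain ⟨hmax, hmin⟩ := S13.extremes h ht hp7 htJ hα
    have hJpos : (0:ℝ) < Jr p := by linarith
    have hC1C : C1 ≤ C := by
      have h1 : C1 ≤ S := by simp only [hSdef]; linarith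
      linarith
    have hconv : (3+t)/(t^2*(Jr p)^2) = C1/(Jr p)^2 := by
      rw [hC1def]
      ring
    have hfin : C1/(Jr p)^2 ≤ C/(Jr p)^2 := by gcongr
    constructor
    · intro i hi
      constructor <;> intro hieq <;> subst hieq
      · rw [hconv] at hmax
        linarith
      · rw [hconv] at hmin
        linarith
    · intro _
      set J := Jr p with hJdef
      set M := α (p-3) with hM
      set m := α 0 with hm
      have hP3 : (p:ℝ) - 3 = 2*J - 2 := by rw [hJdef]; unfold Jr; ring
      have hden : (0:ℝ) < 2*J - 2 := by linarith
      have hJne : J ≠ 0 := ne_of_gt hJpos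
      have htne : t ≠ 0 := ne_of_gt ht
      have hJ1ne : J - 1 ≠ 0 := by intro he; nlinarith [he]
      have hMe := abs_le.mp hmax
      have hme := abs_le.mp hmin
      rw [hconv] at hMe hme
      have h2tJ : 2/(t*J) = 1/(t*J) + 1/(t*J) := by ring
      have hMm : |M - m - 2/(t*J)| ≤ 2*C1/J^2 := by
        rw [abs_le]
        have e : 2*C1/J^2 = C1/J^2 + C1/J^2 := by ring
        constructor <;> rw [e] <;> linarith
      have key : (M-m)/(2*J-2) - 1/(t*J^2) =
          (M - m - 2/(t*J))/(2*J-2) + (2/(t*J)/(2*J-2) - 1/(t*J^2)) := by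
        field_simp
        ring
      have hterm2 : |2/(t*J)/(2*J-2) - 1/(t*J^2)| ≤ 2*(1/t)/J^3 := by
        have hJ1pos : (0:ℝ) < J - 1 := by linarith
        have e : 2/(t*J)/(2*J-2) - 1/(t*J^2) = 1/(t*J^2*(J-1)) := by
          field_simp
          ring
        rw [e, abs_of_pos (by
          apply div_pos one_pos
          apply mul_pos (by positivity) hJ1pos)]
        have e2 : 2*(1/t)/J^3 = 2/(t*J^3) := by field_simp
        rw [e2, div_le_div_iff₀ (mul_pos (by positivity) hJ1pos) (by positivity)]
        nlinarith [mul_pos ht (mul_pos hJpos hJpos)]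
      have hterm1 : |(M - m - 2/(t*J))/(2*J-2)| ≤ (2*C1/J^2)/J := by
        rw [abs_div, abs_of_pos hden]
        apply div_le_div₀ (by positivity) hMm hJpos (by linarith)
      have hnum : 2*C1 + 2*(1/t) ≤ C := by
        have h1 : 2*C1 + 2*(1/t) ≤ S := by simp only [hSdef]; linarith
        exact le_trans h1 hSC
      have hfin3 : (2*C1 + 2*(1/t))/J^3 ≤ C/J^3 := by gcongr
      calc |(M - m)/((p:ℝ)-3) - 1/(t*J^2)|
          = |(M - m - 2/(t*J))/(2*J-2) + (2/(t*J)/(2*J-2) - 1/(t*J^2))| := by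
            rw [hP3, key]
        _ ≤ |(M - m - 2/(t*J))/(2*J-2)| + |2/(t*J)/(2*J-2) - 1/(t*J^2)| := abs_add_le _ _
        _ ≤ (2*C1/J^2)/J + 2*(1/t)/J^3 := add_le_add hterm1 hterm2
        _ = (2*C1 + 2*(1/t))/J^3 := by ring
        _ ≤ C/J^3 := hfin3

end
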